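/- Let Φ be a root system with base Δ and Weyl group W, and let S ⊆ Δ. If R ⊆ Φ⁺ is a set of positive roots and w ∈ W satisfies w(Φ^rad(S)) = R, then R = Φ^rad(S). In other words, Φ^rad(S) is not W-conjugate to any other subset of positive roots. -/

import Mathlib

set_option autoImplicit false

open Module

variable {V : Type*} [DecidableEq V] [NormedAddCommGroup V] [InnerProductSpace ℝ V] [FiniteDimensional ℝ V]

/-- The orthogonal reflection `s_α` in the hyperplane orthogonal to `α`, as a linear
automorphism of `V`. -/
noncomputable def simpleReflection (α : V) : V ≃ₗ[ℝ] V :=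
  (Submodule.reflection ((Submodule.span ℝ {α})ᗮ)).toLinearEquiv

/-- `x` is a nonnegative integer combination of the elements of `Δ`. -/
def IsNNComb (Δ : Finset V) (x : V) : Prop :=
  ∃ c : V → ℕ, x = ∑ a ∈ Δ, (c a : ℝ) • a

/-- The positive roots of `Φ` with respect to the base `Δ`. -/
def posRoots (Φ : Set V) (Δ : Finset V) : Set V := {γ ∈ Φ | IsNNComb Δ γ}

/-- `Φ^rad(S)`: the positive roots that are not nonnegative integer combinations of the
simple roots not in `S`. -/
def phiRad (Φ : Set V) (Δ S : Finset V) : Set V :=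
  {γ ∈ posRoots Φ Δ | ¬ IsNNComb (Δ \ S) γ}

/-- The subgroup of `GL(V)` generated by the reflections `s_α` for `α ∈ I`; for `I = Δ`
this is the Weyl group `W`, and for `I ⊆ Δ` it is the standard parabolic subgroup `W_I`. -/
noncomputable def weylSubgroup (I : Finset V) : Subgroup (V ≃ₗ[ℝ] V) :=
  Subgroup.closure {w | ∃ α ∈ I, w = simpleReflection α}


set_option linter.unusedSectionVars false
set_option maxHeartbeats 1000000

lemma sr_apply (β x : V) :
    simpleReflection β x = x - (2 * (inner ℝ β x / (‖β‖^2 : ℝ))) • β := by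
  show (Submodule.reflection ((Submodule.span ℝ {β})ᗮ)) x = _
  rw [Submodule.reflection_apply, Submodule.starProjection_orthogonal_val]
  have h : ((Submodule.span ℝ {β}).starProjection x : V)
      = ((inner ℝ β x / (‖β‖^2 : ℝ))) • β := Submodule.starProjection_singleton ℝ x
  rw [h, two_smul]
  module

lemma sr_sr (β x : V) : simpleReflection β (simpleReflection β x) = x := by
  show (Submodule.reflection ((Submodule.span ℝ {β})ᗮ)) ((Submodule.reflection ((Submodule.span ℝ {β})ᗮ)) x) = x
  exact Submodule.reflection_reflection _ x

lemma sr_inner (β x y : V) :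
    (inner ℝ (simpleReflection β x) (simpleReflection β y) : ℝ) = inner ℝ x y := by
  show (inner ℝ ((Submodule.reflection ((Submodule.span ℝ {β})ᗮ)) x)
    ((Submodule.reflection ((Submodule.span ℝ {β})ᗮ)) y) : ℝ) = inner ℝ x y
  exact LinearIsometryEquiv.inner_map_map _ x y

lemma sr_self (β : V) : simpleReflection β β = -β := by
  have h : (inner ℝ β β : ℝ) = ‖β‖^2 := real_inner_self_eq_norm_sq β
  rw [sr_apply, h]
  by_cases hβ : β = 0
  · simp [hβ]
  · have hb : ‖β‖ ≠ 0 := norm_ne_zero_iff.mpr hβ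
    have : (‖β‖^2 : ℝ) ≠ 0 := by positivity
    rw [div_self this]
    module

lemma sr_smul {t : ℝ} (ht : t ≠ 0) (β : V) : simpleReflection (t • β) = simpleReflection β := by
  ext x
  rw [sr_apply, sr_apply, real_inner_smul_left, norm_smul]
  by_cases hβ : β = 0
  · simp [hβ]
  · have h1 : (‖β‖ : ℝ) ≠ 0 := by simpa using hβ
    rw [smul_smul, mul_pow, Real.norm_eq_abs, sq_abs]
    congr 1
    field_simp [ht]

lemma sr_conj (g : V ≃ₗ[ℝ] V) (hg : ∀ x y : V, (inner ℝ (g x) (g y) : ℝ) = inner ℝ x y)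
    (β x : V) : simpleReflection (g β) (g x) = g (simpleReflection β x) := by
  rw [sr_apply, sr_apply, hg β x, map_sub, map_smul]
  congr 2
  rw [← real_inner_self_eq_norm_sq, ← real_inner_self_eq_norm_sq, hg]

noncomputable def wprod (l : List V) : V ≃ₗ[ℝ] V := (l.map simpleReflection).prod

lemma wprod_nil : wprod ([] : List V) = 1 := rfl

lemma wprod_cons (a : V) (l : List V) : wprod (a :: l) = simpleReflection a * wprod l := by
  simp [wprod]

lemma wprod_append (l₁ l₂ : List V) : wprod (l₁ ++ l₂) = wprod l₁ * wprod l₂ := by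
  simp [wprod]

lemma le_mul_apply (f g : V ≃ₗ[ℝ] V) (x : V) : (f * g) x = f (g x) := rfl

lemma wprod_inner (l : List V) (x y : V) :
    (inner ℝ (wprod l x) (wprod l y) : ℝ) = inner ℝ x y := by
  induction l with
  | nil => rfl
  | cons a l ih =>
    rw [wprod_cons, le_mul_apply, le_mul_apply, sr_inner, ih]

lemma sr_mul_self (a : V) : simpleReflection a * simpleReflection a = 1 := by
  ext x
  exact sr_sr a x

lemma wprod_reverse (l : List V) : wprod l * wprod l.reverse = 1 := by
  induction l with
  | nil => simp [wprod_nil]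
  | cons a l ih =>
    rw [wprod_cons, List.reverse_cons, wprod_append, ← mul_assoc, mul_assoc (simpleReflection a),
      ih, mul_one]
    have : wprod [a] = simpleReflection a := by rw [wprod_cons, wprod_nil, mul_one]
    rw [this, sr_mul_self]

lemma wprod_inv (l : List V) : (wprod l)⁻¹ = wprod l.reverse := by
  have h : wprod l.reverse * wprod l = 1 := by
    have h2 := wprod_reverse l.reverse
    rwa [List.reverse_reverse] at h2
  exact inv_eq_of_mul_eq_one_left h

lemma wprod_mem (Δ : Finset V) (l : List V) (h : ∀ a ∈ l, a ∈ Δ) :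
    wprod l ∈ weylSubgroup Δ := by
  induction l with
  | nil => exact (weylSubgroup Δ).one_mem
  | cons a l ih =>
    rw [wprod_cons]
    exact mul_mem (Subgroup.subset_closure ⟨a, h a (by simp), rfl⟩)
      (ih fun x hx => h x (by simp [hx]))

lemma weyl_word (Δ : Finset V) (w : V ≃ₗ[ℝ] V) (hw : w ∈ weylSubgroup Δ) :
    ∃ l : List V, (∀ a ∈ l, a ∈ Δ) ∧ w = wprod l := by
  induction hw using Subgroup.closure_induction with
  | mem x hx =>
    obtain ⟨α, hα, rfl⟩ := hx
    exact ⟨[α], by simpa using hα, by rw [wprod_cons, wprod_nil, mul_one]⟩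
  | one => exact ⟨[], by simp, rfl⟩
  | mul x y hx hy ihx ihy =>
    obtain ⟨l₁, h₁, rfl⟩ := ihx
    obtain ⟨l₂, h₂, rfl⟩ := ihy
    exact ⟨l₁ ++ l₂, by (intro a ha; rcases List.mem_append.mp ha with h|h; exacts [h₁ a h, h₂ a h]), (wprod_append l₁ l₂).symm⟩
  | inv x hx ihx =>
    obtain ⟨l, h, rfl⟩ := ihx
    exact ⟨l.reverse, by simp_all, wprod_inv l⟩

section Comb
variable (Δ : Finset V)

lemma coeff_unique (hind : LinearIndependent ℝ (fun a : Δ => (a : V)))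
    (f g : V → ℝ) (h : ∑ a ∈ Δ, f a • a = ∑ a ∈ Δ, g a • a) : ∀ a ∈ Δ, f a = g a := by
  have h0 : ∑ a : Δ, (f (a : V) - g (a : V)) • (a : V) = 0 := by
    rw [Finset.sum_coe_sort Δ (fun a => (f a - g a) • a)]
    simp only [sub_smul, Finset.sum_sub_distrib, h, sub_self]
  have hz := Fintype.linearIndependent_iff.mp hind (fun a => f (a : V) - g (a : V)) h0
  intro a ha
  have := hz ⟨a, ha⟩
  simpa [sub_eq_zero] using this

lemma simple_nncomb {a : V} (ha : a ∈ Δ) : IsNNComb Δ a := by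
  refine ⟨fun x => if x = a then 1 else 0, ?_⟩
  have he : ∀ x ∈ Δ, ((((if x = a then (1 : ℕ) else 0) : ℕ) : ℝ)) • x
      = if x = a then x else 0 := by
    intro x _; split <;> simp
  have key : ∑ x ∈ Δ, ((((if x = a then (1 : ℕ) else 0) : ℕ) : ℝ)) • x = a := by
    rw [Finset.sum_congr rfl he, Finset.sum_ite_eq' Δ a (fun x => x), if_pos ha]
  exact key.symm

lemma nncomb_both_false (hind : LinearIndependent ℝ (fun a : Δ => (a : V)))
    {γ : V} (hγ0 : γ ≠ 0) (h1 : IsNNComb Δ γ) (h2 : IsNNComb Δ (-γ)) : False := by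
  obtain ⟨c, hc⟩ := h1
  obtain ⟨d, hd⟩ := h2
  have key : ∑ a ∈ Δ, ((c a : ℝ) + d a) • a = ∑ a ∈ Δ, (0 : ℝ) • a := by
    simp only [add_smul, Finset.sum_add_distrib, ← hc, ← hd, add_neg_cancel, zero_smul,
      Finset.sum_const_zero]
  have hu := coeff_unique Δ hind _ _ key
  apply hγ0
  rw [hc]
  apply Finset.sum_eq_zero
  intro a ha
  have h := hu a ha
  have hca : (c a : ℝ) = 0 := by
    have : (0 : ℝ) ≤ (c a : ℝ) := Nat.cast_nonneg _
    have : (0 : ℝ) ≤ (d a : ℝ) := Nat.cast_nonneg _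
    linarith
  rw [hca, zero_smul]

lemma nncomb_extend (S : Finset V) {γ : V} (h : IsNNComb (Δ \ S) γ) :
    ∃ d : V → ℕ, γ = ∑ a ∈ Δ, (d a : ℝ) • a ∧ ∀ s ∈ S, d s = 0 := by
  obtain ⟨c, hc⟩ := h
  refine ⟨fun x => if x ∈ Δ \ S then c x else 0, ?_, ?_⟩
  · have key : ∑ x ∈ Δ, (((if x ∈ Δ \ S then c x else 0) : ℕ) : ℝ) • x = γ := by
      rw [hc, ← Finset.sum_subset (Finset.sdiff_subset (s := Δ) (t := S))]
      · apply Finset.sum_congr rfl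
        intro x hx
        rw [if_pos hx]
      · intro x _ hx
        rw [if_neg hx, Nat.cast_zero, zero_smul]
    exact key.symm
  · intro s hs
    have hns : s ∉ Δ \ S := fun hmem => (Finset.mem_sdiff.mp hmem).2 hs
    show (if s ∈ Δ \ S then c s else 0) = 0
    rw [if_neg hns]

lemma rad_char (hind : LinearIndependent ℝ (fun a : Δ => (a : V))) (S : Finset V)
    {γ : V} (c : V → ℕ) (hγ : γ = ∑ a ∈ Δ, (c a : ℝ) • a) :
    ¬ IsNNComb (Δ \ S) γ ↔ ∃ s ∈ Δ, s ∈ S ∧ c s ≠ 0 := by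
  constructor
  · intro h
    by_contra hcon
    push_neg at hcon
    apply h
    refine ⟨c, ?_⟩
    rw [hγ, Finset.sum_subset (Finset.sdiff_subset (s := Δ) (t := S))]
    intro x hxΔ hx
    have hxS : x ∈ S := by
      by_contra hxS
      exact hx (Finset.mem_sdiff.mpr ⟨hxΔ, hxS⟩)
    rw [hcon x hxΔ hxS, Nat.cast_zero, zero_smul]
  · rintro ⟨s, hsΔ, hsS, hcs⟩ h
    obtain ⟨d, hd, hdS⟩ := nncomb_extend Δ S h
    have hu := coeff_unique Δ hind (fun a => (c a : ℝ)) (fun a => (d a : ℝ))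
      (by rw [← hγ, ← hd])
    have heq : (c s : ℝ) = (d s : ℝ) := hu s hsΔ
    rw [hdS s hsS] at heq
    exact hcs (by exact_mod_cast heq)

lemma support_single (hind : LinearIndependent ℝ (fun a : Δ => (a : V)))
    {a : V} (ha : a ∈ Δ) {β : V} (hβ0 : β ≠ 0)
    (h1 : IsNNComb Δ β) (h2 : IsNNComb Δ (-(simpleReflection a β))) :
    ∃ t : ℝ, t ≠ 0 ∧ β = t • a := by
  obtain ⟨c, hc⟩ := h1
  obtain ⟨d, hd⟩ := h2
  set r : ℝ := 2 * (inner ℝ a β / (‖a‖ ^ 2 : ℝ)) with hr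
  have hs : simpleReflection a β = β - r • a := sr_apply a β
  have key : ∑ x ∈ Δ, ((c x : ℝ) + d x) • x = ∑ x ∈ Δ, (if x = a then r else 0) • x := by
    have e1 : ∑ x ∈ Δ, (if x = a then r else 0) • x = r • a := by
      have he : ∀ x ∈ Δ, ((if x = a then r else 0)) • x = if x = a then r • x else 0 := by
        intro x _; split <;> simp
      rw [Finset.sum_congr rfl he, Finset.sum_ite_eq' Δ a (fun x => r • x), if_pos ha]
    rw [e1]
    have e2 : β + (-(simpleReflection a β)) = r • a := by rw [hs]; module
    calc ∑ x ∈ Δ, ((c x : ℝ) + d x) • x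
        = (∑ x ∈ Δ, (c x : ℝ) • x) + ∑ x ∈ Δ, (d x : ℝ) • x := by
          simp [add_smul, Finset.sum_add_distrib]
      _ = r • a := by rw [← hc, ← hd, e2]
  have hu := coeff_unique Δ hind _ _ key
  have hβa : β = (c a : ℝ) • a := by
    rw [hc]
    apply Finset.sum_eq_single_of_mem a ha
    intro x hx hxa
    have h := hu x hx
    rw [if_neg hxa] at h
    have hcx : (c x : ℝ) = 0 := by
      have : (0 : ℝ) ≤ (c x : ℝ) := Nat.cast_nonneg _
      have : (0 : ℝ) ≤ (d x : ℝ) := Nat.cast_nonneg _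
      linarith
    rw [hcx, zero_smul]
  refine ⟨(c a : ℝ), ?_, hβa⟩
  intro hca
  rw [hca, zero_smul] at hβa
  exact hβ0 hβa

end Comb

section Main
variable (Φ : Set V) (Δ : Finset V)
  (h0 : (0 : V) ∉ Φ) (hΔΦ : ↑Δ ⊆ Φ)
  (hind : LinearIndependent ℝ (fun a : Δ => (a : V)))
  (hbase : ∀ γ ∈ Φ, IsNNComb Δ γ ∨ IsNNComb Δ (-γ))
  (hinv : ∀ w ∈ weylSubgroup Δ, ∀ γ ∈ Φ, w γ ∈ Φ)
  (S : Finset V)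

lemma ite_smul_sum {a : V} (ha : a ∈ Δ) (t : ℝ) :
    ∑ x ∈ Δ, (if x = a then t else 0) • x = t • a := by
  have he : ∀ x ∈ Δ, ((if x = a then t else 0)) • x = if x = a then t • x else 0 := by
    intro x _; split <;> simp
  rw [Finset.sum_congr rfl he, Finset.sum_ite_eq' Δ a (fun x => t • x), if_pos ha]

lemma simple_coeff {a : V} (ha : a ∈ Δ) :
    a = ∑ x ∈ Δ, ((((if x = a then (1 : ℕ) else 0) : ℕ) : ℝ)) • x := by
  obtain ⟨c, hc⟩ := simple_nncomb Δ ha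
  have he : ∀ x ∈ Δ, ((((if x = a then (1 : ℕ) else 0) : ℕ) : ℝ)) • x
      = (if x = a then (1:ℝ) else 0) • x := by
    intro x _; split <;> simp
  rw [Finset.sum_congr rfl he, ite_smul_sum Δ ha (1 : ℝ), one_smul]

lemma sr_mem_weyl {a : V} (ha : a ∈ Δ) : simpleReflection a ∈ weylSubgroup Δ :=
  Subgroup.subset_closure ⟨a, ha, rfl⟩

include h0 hΔΦ hind hbase hinv

lemma simple_mem_rad (hS : S ⊆ Δ) {a : V} (ha : a ∈ S) : a ∈ phiRad Φ Δ S := by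
  have haΔ : a ∈ Δ := hS ha
  refine ⟨⟨hΔΦ haΔ, simple_nncomb Δ haΔ⟩, ?_⟩
  rw [rad_char Δ hind S (fun x => if x = a then 1 else 0) (simple_coeff Δ haΔ)]
  exact ⟨a, haΔ, ha, by simp⟩

lemma rad_stable {a : V} (ha : a ∈ Δ) (haS : a ∉ S) {γ : V} (hγ : γ ∈ phiRad Φ Δ S) :
    simpleReflection a γ ∈ phiRad Φ Δ S := by
  obtain ⟨⟨hγΦ, hγNN⟩, hγrad⟩ := hγ
  obtain ⟨c, hc⟩ := hγNN
  obtain ⟨s, hsΔ, hsS, hcs⟩ := (rad_char Δ hind S c hc).mp hγrad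
  have hsa : s ≠ a := fun h => haS (h ▸ hsS)
  have hγ0 : γ ≠ 0 := fun h => h0 (h ▸ hγΦ)
  have hmem : simpleReflection a γ ∈ Φ := hinv _ (sr_mem_weyl Δ ha) γ hγΦ
  have hpos : IsNNComb Δ (simpleReflection a γ) := by
    rcases hbase _ hmem with h | h
    · exact h
    · exfalso
      obtain ⟨t, ht0, hβ⟩ := support_single Δ hind ha hγ0 ⟨c, hc⟩ h
      have hu := coeff_unique Δ hind (fun x => (c x : ℝ)) (fun x => if x = a then t else 0)
        (by rw [← hc, hβ, ite_smul_sum Δ ha t])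
      have hz : (c s : ℝ) = if s = a then t else 0 := hu s hsΔ
      rw [if_neg hsa] at hz
      exact hcs (by exact_mod_cast hz)
  obtain ⟨e, he⟩ := hpos
  refine ⟨⟨hmem, ⟨e, he⟩⟩, ?_⟩
  rw [rad_char Δ hind S e he]
  refine ⟨s, hsΔ, hsS, ?_⟩
  set r : ℝ := 2 * (inner ℝ a γ / (‖a‖ ^ 2 : ℝ)) with hr
  have hsr : simpleReflection a γ = γ - r • a := sr_apply a γ
  have key : ∑ x ∈ Δ, ((e x : ℝ)) • x
      = ∑ x ∈ Δ, ((c x : ℝ) - (if x = a then r else 0)) • x := by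
    have : ∑ x ∈ Δ, ((c x : ℝ) - (if x = a then r else 0)) • x
        = (∑ x ∈ Δ, (c x : ℝ) • x) - ∑ x ∈ Δ, (if x = a then r else 0) • x := by
      simp [sub_smul, Finset.sum_sub_distrib]
    rw [this, ite_smul_sum Δ ha r, ← hc, ← he, ← hsr]
  have hu := coeff_unique Δ hind _ _ key
  have hz : (e s : ℝ) = (c s : ℝ) - (if s = a then r else 0) := hu s hsΔ
  rw [if_neg hsa, sub_zero] at hz
  intro hes
  rw [hes] at hz
  exact hcs (by exact_mod_cast hz.symm)

lemma lemA (l : List V) (hl : ∀ x ∈ l, x ∈ Δ) (α : V) (hα : α ∈ Δ)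
    (hneg : IsNNComb Δ (-(wprod l α))) :
    ∃ l' : List V, (∀ x ∈ l', x ∈ Δ) ∧ l'.length + 1 = l.length ∧
      wprod l' = wprod l * simpleReflection α := by
  induction l with
  | nil =>
    exfalso
    have hα0 : α ≠ 0 := fun h => h0 (h ▸ hΔΦ hα)
    have h1 : wprod ([] : List V) α = α := rfl
    rw [h1] at hneg
    exact nncomb_both_false Δ hind hα0 (simple_nncomb Δ hα) hneg
  | cons a l ih =>
    have haΔ : a ∈ Δ := hl a (by simp)
    have hlΔ : ∀ x ∈ l, x ∈ Δ := fun x hx => hl x (by simp [hx])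
    have hvα : wprod l α ∈ Φ := hinv _ (wprod_mem Δ l hlΔ) α (hΔΦ hα)
    have hvα0 : wprod l α ≠ 0 := fun h => h0 (h ▸ hvα)
    have hcons : wprod (a :: l) α = simpleReflection a (wprod l α) := by
      rw [wprod_cons]; rfl
    rcases hbase _ hvα with hP | hN
    · obtain ⟨t, ht0, hβ⟩ := support_single Δ hind haΔ hvα0 hP (by rwa [← hcons])
      have h1 : simpleReflection a = simpleReflection (wprod l α) := by
        rw [hβ, sr_smul ht0]
      have h2 : simpleReflection a * wprod l = wprod l * simpleReflection α := by
        ext x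
        rw [le_mul_apply, le_mul_apply, h1]
        exact sr_conj (wprod l) (wprod_inner l) α x
      refine ⟨l, hlΔ, rfl, ?_⟩
      rw [wprod_cons, mul_assoc, ← h2, ← mul_assoc, sr_mul_self, one_mul]
    · obtain ⟨l'', hl'', hlen, hprod⟩ := ih hlΔ hN
      refine ⟨a :: l'', ?_, ?_, ?_⟩
      · intro x hx
        rcases List.mem_cons.mp hx with rfl | hx
        · exact haΔ
        · exact hl'' x hx
      · simp only [List.length_cons]; omega
      · rw [wprod_cons, hprod, wprod_cons, mul_assoc]

lemma main_induction : ∀ (n : ℕ) (l : List V), l.length ≤ n → (∀ x ∈ l, x ∈ Δ) →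
    (∀ γ ∈ phiRad Φ Δ S, wprod l γ ∈ posRoots Φ Δ) →
    (S ⊆ Δ) →
    ∀ γ ∈ phiRad Φ Δ S, wprod l γ ∈ phiRad Φ Δ S := by
  intro n
  induction n with
  | zero =>
    intro l hlen _ _ _ γ hγ
    have hnil : l = [] := List.eq_nil_of_length_eq_zero (Nat.le_zero.mp hlen)
    subst hnil
    have : wprod ([] : List V) γ = γ := rfl
    rwa [this]
  | succ n ih =>
    intro l hlen hlΔ hpos hS γ hγ
    rcases List.eq_nil_or_concat l with rfl | ⟨l₁, a, rfl⟩
    · have : wprod ([] : List V) γ = γ := rfl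
      rwa [this]
    · rw [List.concat_eq_append] at *
      have haΔ : a ∈ Δ := hlΔ a (by simp)
      have hl₁ : ∀ x ∈ l₁, x ∈ Δ := fun x hx => hlΔ x (by simp [hx])
      set w := wprod (l₁ ++ [a]) with hwdef
      have hwW : w ∈ weylSubgroup Δ := wprod_mem Δ _ hlΔ
      by_cases hcase : ∃ b ∈ Δ, IsNNComb Δ (-(w b))
      · obtain ⟨b, hbΔ, hbneg⟩ := hcase
        have hbS : b ∉ S := by
          intro hbS
          have hbP : b ∈ phiRad Φ Δ S := simple_mem_rad Φ Δ h0 hΔΦ hind hbase hinv S hS hbS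
          obtain ⟨hwbΦ, hwbNN⟩ := hpos b hbP
          have hwb0 : w b ≠ 0 := fun h => h0 (h ▸ hwbΦ)
          exact nncomb_both_false Δ hind hwb0 hwbNN hbneg
        obtain ⟨l', hl', hlen', hprod⟩ :=
          lemA Φ Δ h0 hΔΦ hind hbase hinv (l₁ ++ [a]) hlΔ b hbΔ hbneg
        have hstable : ∀ δ, δ ∈ phiRad Φ Δ S → simpleReflection b δ ∈ phiRad Φ Δ S :=
          fun δ hδ => rad_stable Φ Δ h0 hΔΦ hind hbase hinv S hbΔ hbS hδ
        have hstep : ∀ δ ∈ phiRad Φ Δ S, wprod l' δ ∈ posRoots Φ Δ := by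
          intro δ hδ
          rw [hprod, le_mul_apply]
          exact hpos _ (hstable δ hδ)
        have hlen2 : l'.length ≤ n := by omega
        have hres := ih l' hlen2 hl' hstep hS
        have hw : w γ = wprod l' (simpleReflection b γ) := by
          rw [hprod, le_mul_apply, sr_sr]
        rw [hw]
        exact hres _ (hstable γ hγ)
      · push_neg at hcase
        have hwa : w a = -(wprod l₁ a) := by
          rw [hwdef, wprod_append, le_mul_apply]
          have h1 : wprod [a] a = -a := by
            rw [wprod_cons, wprod_nil, mul_one]
            exact sr_self a
          rw [h1, map_neg]
        have hwaΦ : w a ∈ Φ := hinv _ hwW a (hΔΦ haΔ)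
        have hwaNN : IsNNComb Δ (w a) := by
          rcases hbase _ hwaΦ with h | h
          · exact h
          · exact absurd h (hcase a haΔ)
        have hneg : IsNNComb Δ (-(wprod l₁ a)) := by rwa [hwa] at hwaNN
        obtain ⟨l', hl', hlen', hprod⟩ :=
          lemA Φ Δ h0 hΔΦ hind hbase hinv l₁ hl₁ a haΔ hneg
        have hw : wprod l' = w := by
          have hsa : wprod [a] = simpleReflection a := by rw [wprod_cons, wprod_nil, mul_one]
          rw [hprod, hwdef, wprod_append, hsa]
        have hlen2 : l'.length ≤ n := by
          have hlap : (l₁ ++ [a]).length = l₁.length + 1 := by simp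
          omega
        have hres := ih l' hlen2 hl' (by rw [hw]; exact hpos) hS γ hγ
        rwa [hw] at hres

end Main

/-- `Φ^rad(S)` is not `W`-conjugate to any other set of positive roots: if
`w(Φ^rad(S)) = R` for some `w ∈ W` and some set `R` of positive roots, then
`R = Φ^rad(S)`. -/
theorem phiRad_not_conjugate
    (Φ : Set V) (Δ : Finset V)
    (hfin : Φ.Finite) (h0 : (0 : V) ∉ Φ) (hΔΦ : ↑Δ ⊆ Φ)
    (hind : LinearIndependent ℝ (fun a : Δ => (a : V)))
    (hbase : ∀ γ ∈ Φ, IsNNComb Δ γ ∨ IsNNComb Δ (-γ))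
    (hinv : ∀ w ∈ weylSubgroup Δ, ∀ γ ∈ Φ, w γ ∈ Φ)
    (S : Finset V) (hS : S ⊆ Δ)
    (R : Set V) (hR : R ⊆ posRoots Φ Δ)
    (w : V ≃ₗ[ℝ] V) (hw : w ∈ weylSubgroup Δ)
    (hwR : (fun x => w x) '' phiRad Φ Δ S = R) :
    R = phiRad Φ Δ S := by
  obtain ⟨l, hlΔ, rfl⟩ := weyl_word Δ w hw
  have hpos : ∀ γ ∈ phiRad Φ Δ S, wprod l γ ∈ posRoots Φ Δ := by
    intro γ hγ
    apply hR
    rw [← hwR]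
    exact ⟨γ, hγ, rfl⟩
  have hmain := main_induction Φ Δ h0 hΔΦ hind hbase hinv S l.length l le_rfl hlΔ hpos hS
  have hsub : R ⊆ phiRad Φ Δ S := by
    rintro x hx
    rw [← hwR] at hx
    obtain ⟨γ, hγ, rfl⟩ := hx
    exact hmain γ hγ
  have hPfin : (phiRad Φ Δ S).Finite :=
    hfin.subset (fun x hx => hx.1.1)
  apply Set.eq_of_subset_of_ncard_le hsub ?_ hPfin
  rw [← hwR, Set.ncard_image_of_injective _ (wprod l).injective]
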